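/- Fix n ≥ 2 and ε > 0. Let V₁ = ℝ^{2n} with its standard inner product, V₂ = ℝ, and let B : V₁ × V₁ → ℝ be the alternating bilinear map B((x,y),(x',y')) = Σ_{j=1}^n (x_j y'_j − y_j x'_j) + ε (x₁ x'₂ − x₂ x'₁), where (x,y) denotes (x₁,…,xₙ,y₁,…,yₙ). Then the H-type deviation of this step-two Carnot datum equals ε · √( (2 + ((n−1)/n) ε²) / (n + 4ε² + ε⁴) ). (This datum models the group Ḡ^n_ε.) -/

import Mathlib

open scoped RealInnerProductSpace

noncomputable section

variable {V₁ : Type*} [NormedAddCommGroup V₁] [InnerProductSpace ℝ V₁] [FiniteDimensional ℝ V₁]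
variable {V₂ : Type*} [AddCommGroup V₂] [Module ℝ V₂] [FiniteDimensional ℝ V₂]

/-- `g` is an inner product (symmetric positive-definite bilinear form) on `V₂`. -/
structure IsInnerProd (g : V₂ →ₗ[ℝ] V₂ →ₗ[ℝ] ℝ) : Prop where
  symm : ∀ s t : V₂, g s t = g t s
  posdef : ∀ t : V₂, t ≠ 0 → 0 < g t t

/-- The norm `‖t‖_g = √(g t t)` associated to a vertical inner product `g`. -/
def gnorm (g : V₂ →ₗ[ℝ] V₂ →ₗ[ℝ] ℝ) (t : V₂) : ℝ := Real.sqrt (g t t)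

/-- The Hilbert–Schmidt norm `‖F‖_HS = √(trace(F* F))` of an endomorphism of the
inner product space `V₁`. -/
def hsNorm (F : V₁ →ₗ[ℝ] V₁) : ℝ :=
  Real.sqrt (LinearMap.trace ℝ V₁ (LinearMap.adjoint F ∘ₗ F))

/-- `J` is the J-operator of the bracket `B` with respect to the vertical inner product `g`:
`⟨J_T U, V⟩_h = g(B(U,V), T)` for all `U V : V₁`, `T : V₂`. -/
def IsJOp (B : V₁ →ₗ[ℝ] V₁ →ₗ[ℝ] V₂) (g : V₂ →ₗ[ℝ] V₂ →ₗ[ℝ] ℝ)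
    (J : V₂ → V₁ →ₗ[ℝ] V₁) : Prop :=
  ∀ (T : V₂) (U V : V₁), ⟪J T U, V⟫ = g (B U V) T

/-- The H-type deviation relative to a fixed vertical inner product `g` with J-operator `J`:
`δ(g) = (dim V₁)^{-1/2} sup { ‖(J_T)² + id‖_HS : ‖T‖_g = 1 }`. -/
def deltaOf (g : V₂ →ₗ[ℝ] V₂ →ₗ[ℝ] ℝ) (J : V₂ → V₁ →ₗ[ℝ] V₁) : ℝ :=
  (Real.sqrt (Module.finrank ℝ V₁))⁻¹ *
    sSup ((fun T => hsNorm (J T ∘ₗ J T + LinearMap.id)) '' {T : V₂ | gnorm g T = 1})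

/-- The H-type deviation of a step-two Carnot datum: the infimum of `δ(g)` over all vertical
inner products `g` on `V₂`. -/
def htypeDeviation (B : V₁ →ₗ[ℝ] V₁ →ₗ[ℝ] V₂) : ℝ :=
  sInf { d : ℝ | ∃ (g : V₂ →ₗ[ℝ] V₂ →ₗ[ℝ] ℝ) (J : V₂ → V₁ →ₗ[ℝ] V₁),
    IsInnerProd g ∧ IsJOp B g J ∧ d = deltaOf g J }

end


set_option linter.unnecessarySeqFocus false
set_option linter.unreachableTactic false
set_option linter.unusedTactic false
set_option maxHeartbeats 1000000

noncomputable section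
open scoped RealInnerProductSpace
abbrev E (n : ℕ) := EuclideanSpace ℝ (Fin n ⊕ Fin n)

def Jmap (n : ℕ) (ε : ℝ) (i0 i1 : Fin n) : E n →ₗ[ℝ] E n where
  toFun u := WithLp.toLp 2 (fun k : Fin n ⊕ Fin n => match k with
    | Sum.inl j => -u (Sum.inr j) + ε * ((if j = i1 then u (Sum.inl i0) else 0)
        - (if j = i0 then u (Sum.inl i1) else 0))
    | Sum.inr j => u (Sum.inl j))
  map_add' u v := by
    ext k
    cases k <;> simp [PiLp.add_apply] <;> split_ifs <;> ring
  map_smul' c u := by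
    ext k
    cases k <;> simp [PiLp.smul_apply, smul_eq_mul] <;> split_ifs <;> ring

lemma Jmap_inl (n : ℕ) (ε : ℝ) (i0 i1 : Fin n) (u : E n) (j : Fin n) :
    Jmap n ε i0 i1 u (.inl j) = -u (.inr j) + ε * ((if j = i1 then u (.inl i0) else 0)
        - (if j = i0 then u (.inl i1) else 0)) := rfl

lemma Jmap_inr (n : ℕ) (ε : ℝ) (i0 i1 : Fin n) (u : E n) (j : Fin n) :
    Jmap n ε i0 i1 u (.inr j) = u (.inl j) := rfl

lemma sum_ite2 (n : ℕ) (i0 i1 : Fin n) (h01 : i0 ≠ i1) (A B C : ℝ) :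
    ∑ j : Fin n, (if j = i0 then A else if j = i1 then B else C)
      = A + B + ((n : ℝ) - 2) * C := by
  have key : ∀ j : Fin n, (if j = i0 then A else if j = i1 then B else C)
      = (if j = i0 then A - C else 0) + ((if j = i1 then B - C else 0) + C) := by
    intro j
    rcases eq_or_ne j i0 with h | h
    · subst h; simp [h01]
    · rcases eq_or_ne j i1 with h' | h'
      · subst h'; simp [h]
      · simp [h, h']
  rw [Finset.sum_congr rfl fun j _ => key j]
  rw [Finset.sum_add_distrib, Finset.sum_add_distrib, Finset.sum_ite_eq',
    Finset.sum_ite_eq', Finset.sum_const]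
  simp only [Finset.mem_univ, if_true, Finset.card_univ, Fintype.card_fin, nsmul_eq_mul]
  ring

open Sum in
lemma trace_M (n : ℕ) (ε c : ℝ) (i0 i1 : Fin n) (h01 : i0 ≠ i1) :
    LinearMap.trace ℝ (E n)
      (LinearMap.adjoint (c • (Jmap n ε i0 i1 ∘ₗ Jmap n ε i0 i1) + LinearMap.id)
        ∘ₗ (c • (Jmap n ε i0 i1 ∘ₗ Jmap n ε i0 i1) + LinearMap.id)) =
    2*((1+ε^2)*c - 1)^2 + 2*((n:ℝ)-1)*(c-1)^2 + 4*ε^2*c^2 := by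
  have h10 : i1 ≠ i0 := h01.symm
  set J := Jmap n ε i0 i1 with hJ
  set M : E n →ₗ[ℝ] E n := c • (J ∘ₗ J) + LinearMap.id with hM
  -- trace formula
  have htr : LinearMap.trace ℝ (E n) (LinearMap.adjoint M ∘ₗ M)
      = ∑ i : Fin n ⊕ Fin n, ⟪M (EuclideanSpace.single i 1), M (EuclideanSpace.single i 1)⟫ := by
    rw [LinearMap.trace_eq_matrix_trace ℝ (EuclideanSpace.basisFun (Fin n ⊕ Fin n) ℝ).toBasis,
      Matrix.trace]
    simp only [Matrix.diag, LinearMap.toMatrix_apply, OrthonormalBasis.coe_toBasis_repr_apply,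
      OrthonormalBasis.repr_apply_apply, OrthonormalBasis.coe_toBasis, LinearMap.comp_apply,
      LinearMap.adjoint_inner_right, EuclideanSpace.basisFun_apply]
  rw [htr]
  -- inner products as coordinate sums
  have hinner : ∀ x : E n, ⟪x, x⟫ = ∑ k : Fin n ⊕ Fin n, (x k)^2 := by
    intro x
    rw [PiLp.inner_apply]
    simp [RCLike.inner_apply, sq]
  rw [Finset.sum_congr rfl fun i _ => hinner _, Fintype.sum_sum_type]
  have hsingle : ∀ (i k : Fin n ⊕ Fin n), (EuclideanSpace.single i (1:ℝ)) k
      = if k = i then 1 else 0 := by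
    intro i k; rw [EuclideanSpace.single_apply]
  have hMapp : ∀ (u : E n) (k), M u k = c * (J (J u)) k + u k := by
    intro u k
    simp [hM, LinearMap.add_apply, LinearMap.smul_apply, LinearMap.comp_apply,
      PiLp.add_apply, PiLp.smul_apply, smul_eq_mul]
  have sum_sq_ite : ∀ (a : Fin n) (A : ℝ), ∑ j : Fin n, (if j = a then A else 0)^2 = A^2 := by
    intro a A
    have key : ∀ j : Fin n, (if j = a then A else 0)^2 = if j = a then A^2 else 0 := by
      intro j; split_ifs <;> ring
    rw [Finset.sum_congr rfl fun j _ => key j, Finset.sum_ite_eq']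
    simp
  -- column sums, inl part
  have hL : ∀ p : Fin n,
      (∑ k : Fin n ⊕ Fin n, (M (EuclideanSpace.single (inl p) 1) k)^2)
      = if p = i0 then ((1-c-c*ε^2)^2 + c^2*ε^2)
        else if p = i1 then ((1-c-c*ε^2)^2 + c^2*ε^2) else (1-c)^2 := by
    intro p
    rw [Fintype.sum_sum_type]
    rcases eq_or_ne p i0 with hp | hp
    · subst hp
      have e1 : ∀ j, M (EuclideanSpace.single (inl p) 1) (inl j)
          = if j = p then (1-c-c*ε^2) else 0 := by
        intro j
        simp only [hMapp, hJ, Jmap_inl, Jmap_inr, hsingle, Sum.inl.injEq, reduceCtorEq,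
          if_false, if_true]
        rcases eq_or_ne j p with h | h
        · simp [h, h01, h10]
          try ring
        · simp [h, h01, h10]
          try ring
      have e2 : ∀ j, M (EuclideanSpace.single (inl p) 1) (inr j)
          = if j = i1 then c*ε else 0 := by
        intro j
        simp only [hMapp, hJ, Jmap_inl, Jmap_inr, hsingle, Sum.inl.injEq, reduceCtorEq,
          if_false, if_true]
        rcases eq_or_ne j i1 with h | h
        · simp [h, h01, h10]
          try ring
        · simp [h, h01, h10]
          try ring
      rw [Finset.sum_congr rfl fun j _ => congrArg (·^2) (e1 j),
        Finset.sum_congr rfl fun j _ => congrArg (·^2) (e2 j), sum_sq_ite, sum_sq_ite]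
      simp [h01, h10]
      ring
    · rcases eq_or_ne p i1 with hp1 | hp1
      · subst hp1
        have e1 : ∀ j, M (EuclideanSpace.single (inl p) 1) (inl j)
            = if j = p then (1-c-c*ε^2) else 0 := by
          intro j
          simp only [hMapp, hJ, Jmap_inl, Jmap_inr, hsingle, Sum.inl.injEq, reduceCtorEq,
            if_false, if_true]
          rcases eq_or_ne j p with h | h
          · simp [h, hp, Ne.symm hp]
            try ring
          · rcases eq_or_ne j i0 with h' | h'
            · simp [h, h', hp, Ne.symm hp]
            · simp [h, h', hp, Ne.symm hp]
        have e2 : ∀ j, M (EuclideanSpace.single (inl p) 1) (inr j)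
            = if j = i0 then -(c*ε) else 0 := by
          intro j
          simp only [hMapp, hJ, Jmap_inl, Jmap_inr, hsingle, Sum.inl.injEq, reduceCtorEq,
            if_false, if_true]
          rcases eq_or_ne j i0 with h | h
          · simp [h, hp, Ne.symm hp]
            try ring
          · simp [h, hp, Ne.symm hp]
        rw [Finset.sum_congr rfl fun j _ => congrArg (·^2) (e1 j),
          Finset.sum_congr rfl fun j _ => congrArg (·^2) (e2 j), sum_sq_ite, sum_sq_ite]
        simp [hp, Ne.symm hp]
        ring
      · have e1 : ∀ j, M (EuclideanSpace.single (inl p) 1) (inl j)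
            = if j = p then (1-c) else 0 := by
          intro j
          simp only [hMapp, hJ, Jmap_inl, Jmap_inr, hsingle, Sum.inl.injEq, reduceCtorEq,
            if_false, if_true]
          rcases eq_or_ne j p with h | h
          · simp [h, hp, hp1, Ne.symm hp, Ne.symm hp1]
            try ring
          · rcases eq_or_ne j i0 with h' | h' <;> rcases eq_or_ne j i1 with h'' | h'' <;>
              simp [h, h', h'', hp, hp1, Ne.symm hp, Ne.symm hp1]
        have e2 : ∀ j, M (EuclideanSpace.single (inl p) 1) (inr j)
            = if j = p then 0 else 0 := by
          intro j
          simp only [hMapp, hJ, Jmap_inl, Jmap_inr, hsingle, Sum.inl.injEq, reduceCtorEq,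
            if_false, if_true]
          rcases eq_or_ne j i0 with h' | h' <;> rcases eq_or_ne j i1 with h'' | h'' <;>
            simp [h', h'', hp, hp1, Ne.symm hp, Ne.symm hp1]
        rw [Finset.sum_congr rfl fun j _ => congrArg (·^2) (e1 j),
          Finset.sum_congr rfl fun j _ => congrArg (·^2) (e2 j), sum_sq_ite, sum_sq_ite]
        simp [hp, hp1]
  -- column sums, inr part
  have hR : ∀ p : Fin n,
      (∑ k : Fin n ⊕ Fin n, (M (EuclideanSpace.single (inr p) 1) k)^2)
      = if p = i0 then (c^2*ε^2 + (1-c)^2)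
        else if p = i1 then (c^2*ε^2 + (1-c)^2) else (1-c)^2 := by
    intro p
    rw [Fintype.sum_sum_type]
    rcases eq_or_ne p i0 with hp | hp
    · subst hp
      have e1 : ∀ j, M (EuclideanSpace.single (inr p) 1) (inl j)
          = if j = i1 then -(c*ε) else 0 := by
        intro j
        simp only [hMapp, hJ, Jmap_inl, Jmap_inr, hsingle, Sum.inr.injEq, reduceCtorEq,
          if_false, if_true]
        rcases eq_or_ne j i1 with h | h <;> rcases eq_or_ne j p with h' | h' <;>
            simp [h, h', h01, h10] <;> try ring
      have e2 : ∀ j, M (EuclideanSpace.single (inr p) 1) (inr j)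
          = if j = p then (1-c) else 0 := by
        intro j
        simp only [hMapp, hJ, Jmap_inl, Jmap_inr, hsingle, Sum.inr.injEq, reduceCtorEq,
          if_false, if_true]
        rcases eq_or_ne j p with h | h <;> rcases eq_or_ne j i1 with h' | h' <;>
            simp [h, h', h01, h10] <;> try ring
      rw [Finset.sum_congr rfl fun j _ => congrArg (·^2) (e1 j),
        Finset.sum_congr rfl fun j _ => congrArg (·^2) (e2 j), sum_sq_ite, sum_sq_ite]
      simp [h01, h10]
      ring
    · rcases eq_or_ne p i1 with hp1 | hp1
      · subst hp1
        have e1 : ∀ j, M (EuclideanSpace.single (inr p) 1) (inl j)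
            = if j = i0 then c*ε else 0 := by
          intro j
          simp only [hMapp, hJ, Jmap_inl, Jmap_inr, hsingle, Sum.inr.injEq, reduceCtorEq,
            if_false, if_true]
          rcases eq_or_ne j i0 with h | h <;> rcases eq_or_ne j p with h' | h' <;>
              simp [h, h', hp, Ne.symm hp] <;> try ring
        have e2 : ∀ j, M (EuclideanSpace.single (inr p) 1) (inr j)
            = if j = p then (1-c) else 0 := by
          intro j
          simp only [hMapp, hJ, Jmap_inl, Jmap_inr, hsingle, Sum.inr.injEq, reduceCtorEq,
            if_false, if_true]
          rcases eq_or_ne j p with h | h <;> rcases eq_or_ne j i0 with h' | h' <;>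
              simp [h, h', hp, Ne.symm hp] <;> try ring
        rw [Finset.sum_congr rfl fun j _ => congrArg (·^2) (e1 j),
          Finset.sum_congr rfl fun j _ => congrArg (·^2) (e2 j), sum_sq_ite, sum_sq_ite]
        simp [hp, Ne.symm hp]
        ring
      · have e1 : ∀ j, M (EuclideanSpace.single (inr p) 1) (inl j)
            = if j = p then 0 else 0 := by
          intro j
          simp only [hMapp, hJ, Jmap_inl, Jmap_inr, hsingle, Sum.inr.injEq, reduceCtorEq,
            if_false, if_true]
          rcases eq_or_ne j i0 with h' | h' <;> rcases eq_or_ne j i1 with h'' | h'' <;>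
            simp [h', h'', hp, hp1, Ne.symm hp, Ne.symm hp1]
        have e2 : ∀ j, M (EuclideanSpace.single (inr p) 1) (inr j)
            = if j = p then (1-c) else 0 := by
          intro j
          simp only [hMapp, hJ, Jmap_inl, Jmap_inr, hsingle, Sum.inr.injEq, reduceCtorEq,
            if_false, if_true]
          rcases eq_or_ne j p with h | h <;>
            simp [h, hp, hp1, Ne.symm hp, Ne.symm hp1] <;> try ring
        rw [Finset.sum_congr rfl fun j _ => congrArg (·^2) (e1 j),
          Finset.sum_congr rfl fun j _ => congrArg (·^2) (e2 j), sum_sq_ite, sum_sq_ite]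
        simp [hp, hp1]
  rw [Finset.sum_congr rfl fun p _ => hL p, Finset.sum_congr rfl fun p _ => hR p,
    sum_ite2 n i0 i1 h01, sum_ite2 n i0 i1 h01]
  ring


lemma inner_Jmap (n : ℕ) (ε : ℝ) (i0 i1 : Fin n) (h01 : i0 ≠ i1) (u v : E n) :
    ⟪Jmap n ε i0 i1 u, v⟫ =
      (∑ j : Fin n, (u (Sum.inl j) * v (Sum.inr j) - u (Sum.inr j) * v (Sum.inl j)))
        + ε * (u (Sum.inl i0) * v (Sum.inl i1) - u (Sum.inl i1) * v (Sum.inl i0)) := by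
  rw [PiLp.inner_apply]
  simp only [RCLike.inner_apply, conj_trivial, Fintype.sum_sum_type, Jmap_inl, Jmap_inr]
  have h1 : ∀ x : Fin n,
      (-u (Sum.inr x) + ε * ((if x = i1 then u (Sum.inl i0) else 0)
        - (if x = i0 then u (Sum.inl i1) else 0))) * v (Sum.inl x)
      = -(u (Sum.inr x) * v (Sum.inl x))
        + ((if x = i1 then ε * (u (Sum.inl i0) * v (Sum.inl i1)) else 0)
          - (if x = i0 then ε * (u (Sum.inl i1) * v (Sum.inl i0)) else 0)) := by
    intro x
    rcases eq_or_ne x i1 with hx1 | hx1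
    · subst hx1; simp [Ne.symm h01]; ring
    · rcases eq_or_ne x i0 with hx0 | hx0
      · subst hx0; simp [h01, hx1]; ring
      · simp [hx1, hx0]
  rw [Finset.sum_congr rfl (fun x _ => (mul_comm _ _).trans (h1 x))]
  simp only [Finset.sum_add_distrib, Finset.sum_sub_distrib, Finset.sum_neg_distrib,
    Finset.sum_ite_eq', Finset.mem_univ, if_true]
  rw [Finset.sum_congr rfl fun x _ => mul_comm (v (Sum.inr x)) (u (Sum.inl x))]
  ring

lemma deltaOf_eq (n : ℕ) (ε : ℝ) (i0 i1 : Fin n) (h01 : i0 ≠ i1)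
    (g : ℝ →ₗ[ℝ] ℝ →ₗ[ℝ] ℝ) (J' : ℝ → E n →ₗ[ℝ] E n)
    (hg : IsInnerProd g)
    (hJ' : ∀ (T : ℝ) (u v : E n), ⟪J' T u, v⟫ = g (⟪Jmap n ε i0 i1 u, v⟫) T) :
    deltaOf g J' = (Real.sqrt ((Module.finrank ℝ (E n) : ℕ) : ℝ))⁻¹ *
      Real.sqrt (2*((1+ε^2)*(g 1 1) - 1)^2 + 2*((n:ℝ)-1)*((g 1 1)-1)^2 + 4*ε^2*(g 1 1)^2) := by
  set c : ℝ := g 1 1 with hc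
  have hcpos : 0 < c := hg.posdef 1 one_ne_zero
  have hgst : ∀ s t : ℝ, g s t = s * t * c := by
    intro s t
    have : g s t = g (s • (1:ℝ)) (t • (1:ℝ)) := by norm_num
    rw [this, LinearMap.map_smul₂, LinearMap.map_smul]
    simp [smul_eq_mul, hc]
    ring
  -- J' T = (c*T) • Jmap
  have hJform : ∀ T : ℝ, J' T = (c*T) • Jmap n ε i0 i1 := by
    intro T
    apply LinearMap.ext
    intro u
    apply ext_inner_right ℝ
    intro v
    rw [hJ', hgst]
    simp only [LinearMap.smul_apply, real_inner_smul_left]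
    ring
  -- on the sphere, the operator is c • J² + id
  have hop : ∀ T : ℝ, gnorm g T = 1 →
      J' T ∘ₗ J' T + LinearMap.id
        = c • (Jmap n ε i0 i1 ∘ₗ Jmap n ε i0 i1) + LinearMap.id := by
    intro T hT
    have hT2 : T * T * c = 1 := by
      have := hT
      rw [gnorm, hgst] at this
      exact Real.sqrt_eq_one.mp this
    rw [hJform T, LinearMap.smul_comp, LinearMap.comp_smul, smul_smul]
    congr 1
    have : c * T * (c * T) = c := by
      nlinarith [hT2]
    rw [this]
  -- the image set is a singleton
  have himg : ((fun T => hsNorm (J' T ∘ₗ J' T + LinearMap.id)) '' {T : ℝ | gnorm g T = 1})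
      = {Real.sqrt (2*((1+ε^2)*c - 1)^2 + 2*((n:ℝ)-1)*(c-1)^2 + 4*ε^2*c^2)} := by
    apply Set.eq_singleton_iff_nonempty_unique_mem.mpr
    constructor
    · refine ⟨_, ⟨(Real.sqrt c)⁻¹, ?_, rfl⟩⟩
      simp only [Set.mem_setOf_eq, gnorm, hgst]
      rw [show (Real.sqrt c)⁻¹ * (Real.sqrt c)⁻¹ * c = 1 by
        rw [← mul_inv]
        rw [Real.mul_self_sqrt hcpos.le]
        field_simp]
      exact Real.sqrt_one
    · rintro d ⟨T, hT, rfl⟩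
      show hsNorm (J' T ∘ₗ J' T + LinearMap.id) = _
      rw [hop T hT, hsNorm, trace_M n ε c i0 i1 h01]
  rw [deltaOf, himg, csSup_singleton]
end

noncomputable section

open scoped RealInnerProductSpace
open Sum

/-- H-type deviation of the group `Ḡ^n_ε` (`n ≥ 2`, `ε > 0`): `V₁ = ℝ^{2n}`, `V₂ = ℝ`,
with bracket `B((x,y),(x',y')) = Σⱼ (xⱼ y'ⱼ − yⱼ x'ⱼ) + ε (x₁ x'₂ − x₂ x'₁)`.
Then `δ = ε √((2 + ((n−1)/n) ε²)/(n + 4ε² + ε⁴))`. -/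
theorem htypeDeviation_Gbar_eps
    (n : ℕ) (hn : 2 ≤ n) (ε : ℝ) (hε : 0 < ε)
    (B : EuclideanSpace ℝ (Fin n ⊕ Fin n) →ₗ[ℝ]
      EuclideanSpace ℝ (Fin n ⊕ Fin n) →ₗ[ℝ] ℝ)
    (hB : ∀ u v : EuclideanSpace ℝ (Fin n ⊕ Fin n),
      B u v =
        (∑ j : Fin n, (u (Sum.inl j) * v (Sum.inr j) - u (Sum.inr j) * v (Sum.inl j)))
        + ε * (u (Sum.inl ⟨0, by omega⟩) * v (Sum.inl ⟨1, by omega⟩)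
              - u (Sum.inl ⟨1, by omega⟩) * v (Sum.inl ⟨0, by omega⟩))) :
    htypeDeviation B =
      ε * Real.sqrt ((2 + (((n : ℝ) - 1) / (n : ℝ)) * ε ^ 2)
        / ((n : ℝ) + 4 * ε ^ 2 + ε ^ 4)) := by
  have hn0 : (0:ℝ) < (n:ℝ) := by
    have : (0:ℕ) < n := by omega
    exact_mod_cast this
  have hnR : (2:ℝ) ≤ (n:ℝ) := by exact_mod_cast hn
  set i0 : Fin n := ⟨0, by omega⟩ with hi0
  set i1 : Fin n := ⟨1, by omega⟩ with hi1
  have h01 : i0 ≠ i1 := by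
    simp [hi0, hi1, Fin.ext_iff]
  have hB' : ∀ u v : E n, B u v = ⟪Jmap n ε i0 i1 u, v⟫ := by
    intro u v
    rw [hB, inner_Jmap n ε i0 i1 h01]
  set D : ℝ := (n:ℝ) + 4*ε^2 + ε^4 with hD_def
  set N : ℝ := (n:ℝ) + ε^2 with hN_def
  set q : ℝ := 2 + (((n:ℝ)-1)/(n:ℝ))*ε^2 with hq_def
  have hD : 0 < D := by rw [hD_def]; positivity
  have hN : 0 < N := by rw [hN_def]; positivity
  have hq0 : 0 ≤ q := by
    rw [hq_def]
    have h1 : 0 ≤ ((n:ℝ)-1)/(n:ℝ) := by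
      apply div_nonneg <;> linarith
    nlinarith [sq_nonneg ε]
  set φ : ℝ → ℝ := fun c => 2*((1+ε^2)*c-1)^2 + 2*((n:ℝ)-1)*(c-1)^2 + 4*ε^2*c^2 with hφ_def
  have hfr : ((Module.finrank ℝ (E n) : ℕ) : ℝ) = 2*(n:ℝ) := by
    rw [finrank_euclideanSpace]
    simp [Fintype.card_sum]
    push_cast
    ring
  set f : ℝ → ℝ := fun c => (Real.sqrt ((Module.finrank ℝ (E n) : ℕ) : ℝ))⁻¹ *
      Real.sqrt (φ c) with hf_def
  have hset : { d : ℝ | ∃ (g : ℝ →ₗ[ℝ] ℝ →ₗ[ℝ] ℝ) (J' : ℝ → E n →ₗ[ℝ] E n),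
      IsInnerProd g ∧ IsJOp B g J' ∧ d = deltaOf g J' } = f '' Set.Ioi 0 := by
    ext d
    constructor
    · rintro ⟨g, J', hg, hJop, rfl⟩
      refine ⟨g 1 1, hg.posdef 1 one_ne_zero, ?_⟩
      simp only [hf_def, hφ_def]
      exact (deltaOf_eq n ε i0 i1 h01 g J' hg
        (fun T u v => by rw [hJop T u v, ← hB' u v])).symm
    · rintro ⟨c, hc, rfl⟩
      have hc' : (0:ℝ) < c := hc
      have hg : IsInnerProd (c • (LinearMap.mul ℝ ℝ)) := by
        constructor
        · intro s t
          simp only [LinearMap.smul_apply, smul_eq_mul, LinearMap.mul_apply']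
          ring
        · intro t ht
          simp only [LinearMap.smul_apply, smul_eq_mul, LinearMap.mul_apply']
          exact mul_pos hc' (mul_self_pos.mpr ht)
      have hJ'' : ∀ (T : ℝ) (u v : E n),
          ⟪((c*T) • Jmap n ε i0 i1) u, v⟫
            = (c • (LinearMap.mul ℝ ℝ)) (⟪Jmap n ε i0 i1 u, v⟫) T := by
        intro T u v
        simp only [LinearMap.smul_apply, real_inner_smul_left, LinearMap.mul_apply',
          smul_eq_mul]
        ring
      refine ⟨c • (LinearMap.mul ℝ ℝ), fun T => (c*T) • Jmap n ε i0 i1, hg, ?_, ?_⟩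
      · intro T u v
        rw [hB']
        exact hJ'' T u v
      · rw [deltaOf_eq n ε i0 i1 h01 _ _ hg hJ'']
        have hX : (c • (LinearMap.mul ℝ ℝ)) (1:ℝ) (1:ℝ) = c := by
          simp
        rw [hX]
  rw [htypeDeviation, hset]
  set t : ℝ := ε * Real.sqrt (q / D) with ht_def
  have hkey : ∀ c : ℝ, φ c * D = 2*(c*D - N)^2 + (4*(n:ℝ)*ε^2 + 2*((n:ℝ)-1)*ε^4) := by
    intro c
    simp only [hφ_def, hD_def, hN_def]
    ring
  have hq2 : ε^2*q*(2*(n:ℝ)) = 4*(n:ℝ)*ε^2 + 2*((n:ℝ)-1)*ε^4 := by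
    rw [hq_def]
    field_simp
    ring
  have hf_eq : ∀ c : ℝ, f c = Real.sqrt ((2*(n:ℝ))⁻¹ * φ c) := by
    intro c
    simp only [hf_def]
    rw [hfr, Real.sqrt_mul (by positivity) (φ c), Real.sqrt_inv]
  have ht_eq : t = Real.sqrt (ε^2 * (q/D)) := by
    rw [ht_def, Real.sqrt_mul (sq_nonneg ε), Real.sqrt_sq hε.le]
  have hle : ∀ c : ℝ, t ≤ f c := by
    intro c
    rw [ht_eq, hf_eq]
    apply Real.sqrt_le_sqrt
    rw [show ε^2*(q/D) = (ε^2*q)/D by ring,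
      show (2*(n:ℝ))⁻¹ * φ c = φ c / (2*(n:ℝ)) by ring,
      div_le_div_iff₀ hD (by positivity)]
    rw [hq2, hkey c]
    nlinarith [sq_nonneg (c*D - N)]
  have hc0 : (0:ℝ) < N/D := div_pos hN hD
  have hmem : f (N/D) = t := by
    rw [hf_eq, ht_eq]
    congr 1
    have h1 := hkey (N/D)
    have h2 : (N/D)*D - N = 0 := by field_simp; ring
    rw [h2] at h1
    have h3 : φ (N/D) = (4*(n:ℝ)*ε^2 + 2*((n:ℝ)-1)*ε^4) / D := by
      rw [eq_div_iff hD.ne']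
      linarith [h1]
    rw [h3, ← hq2]
    field_simp
    try ring
  have hbdd : BddBelow (f '' Set.Ioi 0) := by
    refine ⟨t, ?_⟩
    rintro d ⟨c, hcc, rfl⟩
    exact hle c
  have hmem' : t ∈ f '' Set.Ioi 0 := ⟨N/D, hc0, hmem⟩
  have hne : (f '' Set.Ioi 0).Nonempty := ⟨t, hmem'⟩
  apply le_antisymm
  · exact csInf_le hbdd hmem'
  · apply le_csInf hne
    rintro d ⟨c, hcc, rfl⟩
    exact hle c

end
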